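/- arXiv:math/0702177 — 2 statements merged into one kernel-verified Lean document; each statement's English description precedes it below -/
import Mathlib

section
/- Let (W,S) be a Coxeter system with s_0 evenly-laced. For any w ∈ W^+, identifying subscripts of R = {r_1,...,r_n} with subscripts of S \ {s_0} = {s_1,...,s_n}, the symmetrized descent set satisfies Des_R-hat(w) = Des_S(τ^{-1}(w)), where τ^{-1}(w) is the unique element of {w, w s_0} lying in W^{{s_0}} (the minimal coset representatives of W/W_{⟨s_0⟩}). For arbitrary s_0 one has the inclusion Des_S(τ^{-1}(w)) ⊆ Nasc_R-hat(w). -/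
open CoxeterSystem

namespace AltCox

variable {W : Type*} [Group W]

/-- Word length of `w` with respect to a generating set `A`:
the minimum length of a word in `A` whose product is `w`. -/
noncomputable def glen (A : Set W) (w : W) : ℕ :=
  sInf {k | ∃ l : List W, (∀ x ∈ l, x ∈ A) ∧ l.prod = w ∧ l.length = k}

variable {n : ℕ} {M : CoxeterMatrix (Fin (n + 1))} (cs : CoxeterSystem M W)

/-- The alternating subgroup `W⁺`: the kernel of the sign character, i.e. the
set of elements of even Coxeter length. -/
def alt : Subgroup W where
  carrier := {w | Even (cs.length w)}
  one_mem' := by simp [Nat.even_iff]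
  mul_mem' := by
    intro a b ha hb
    simp only [Set.mem_setOf_eq, Nat.even_iff] at *
    have := cs.length_mul_mod_two a b
    omega
  inv_mem' := by
    intro a ha
    simpa [cs.length_inv] using ha

/-- The generating set `R = {r_i = s₀ sᵢ : i ≠ 0}` of `W⁺`. -/
def Rset : Set W := {x | ∃ i : Fin (n + 1), i ≠ 0 ∧ x = cs.simple 0 * cs.simple i}

/-- The symmetrized generating set `R ∪ R⁻¹`. -/
def Rsym : Set W := Rset cs ∪ (Rset cs)⁻¹

/-- `ν w`: the minimum number of letters different from `s₀` among all words
in the simple reflections whose product is `w`. -/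
noncomputable def nu (w : W) : ℕ :=
  sInf {k | ∃ ω : List (Fin (n + 1)), cs.wordProd ω = w ∧
    (ω.filter (fun i => i ≠ 0)).length = k}

/-- `τ w` is the unique element of `{w, w s₀}` lying in `W⁺`. -/
noncomputable def tau (w : W) : W :=
  if Even (cs.length w) then w else w * cs.simple 0

/-- `s₀` is evenly laced: `m₀ᵢ` is even or infinite (encoded by `0`) for all `i ≠ 0`. -/
def EvenlyLaced (M : CoxeterMatrix (Fin (n + 1))) : Prop :=
  ∀ i : Fin (n + 1), i ≠ 0 → Even (M 0 i)

/-- The set of all reflections of `(W, S)`. -/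
def Tall : Set W := {t | cs.IsReflection t}

/-- The set `T̂` of reflections conjugate to some simple reflection other than `s₀`. -/
def That : Set W := {t | ∃ w : W, ∃ i : Fin (n + 1), i ≠ 0 ∧ t = w * cs.simple i * w⁻¹}

/-- The set of odd palindromes of `W⁺` with respect to `R`. -/
def Palin : Set W :=
  {p | ∃ l : List W, (∀ x ∈ l, x ∈ Rsym cs) ∧ Odd l.length ∧ l.reverse = l ∧ l.prod = p}

/-- The set of left-shortening palindromes of `w`. -/
noncomputable def PL (w : W) : Set W :=
  {p ∈ Palin cs | glen (Rsym cs) (p * w) < glen (Rsym cs) w}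

/-- The set of right-shortening palindromes of `w`. -/
noncomputable def PR (w : W) : Set W :=
  {p ∈ Palin cs | glen (Rsym cs) (w * p) < glen (Rsym cs) w}

/-- The right weak order on `(W⁺, R)`. -/
noncomputable def rweak (u w : W) : Prop :=
  Relation.ReflTransGen
    (fun a b => ∃ r ∈ Rsym cs, b = a * r ∧
      glen (Rsym cs) b = glen (Rsym cs) a + 1) u w

/-- The left weak order on `(W⁺, R)`. -/
noncomputable def lweak (u w : W) : Prop :=
  Relation.ReflTransGen
    (fun a b => ∃ r ∈ Rsym cs, b = r * a ∧
      glen (Rsym cs) b = glen (Rsym cs) a + 1) u w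

/-- The right strong order on `(W⁺, R)`. -/
noncomputable def rstrong (u w : W) : Prop :=
  Relation.ReflTransGen
    (fun a b => ∃ p ∈ Palin cs, b = a * p ∧
      glen (Rsym cs) a < glen (Rsym cs) b) u w

/-- The left strong order on `(W⁺, R)`. -/
noncomputable def lstrong (u w : W) : Prop :=
  Relation.ReflTransGen
    (fun a b => ∃ p ∈ Palin cs, b = p * a ∧
      glen (Rsym cs) a < glen (Rsym cs) b) u w

/-- The strong Bruhat order on a Coxeter system. -/
noncomputable def bruhatLE {B : Type*} {M' : CoxeterMatrix B} {W' : Type*} [Group W']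
    (cs' : CoxeterSystem M' W') (u w : W') : Prop :=
  Relation.ReflTransGen
    (fun a b => ∃ t, cs'.IsReflection t ∧ b = a * t ∧ cs'.length a < cs'.length b) u w

/-- The right weak order of a Coxeter system. -/
noncomputable def coxRweak {B : Type*} {M' : CoxeterMatrix B} {W' : Type*} [Group W']
    (cs' : CoxeterSystem M' W') (u w : W') : Prop :=
  Relation.ReflTransGen
    (fun a b => ∃ i, b = a * cs'.simple i ∧ cs'.length b = cs'.length a + 1) u w

/-- The standard parabolic subgroup `W_J` for `J ⊆ S`. -/
def parabolic (J : Set (Fin (n + 1))) : Subgroup W :=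
  Subgroup.closure (cs.simple '' J)

/-- The image `τ(J) = {s₀ sᵢ : sᵢ ∈ J, i ≠ 0}` of a subset `J ⊆ S` containing `s₀`. -/
def tauSet (J : Set (Fin (n + 1))) : Set W :=
  {x | ∃ i ∈ J, i ≠ 0 ∧ x = cs.simple 0 * cs.simple i}

/-- The set `W^J` of minimum-length coset representatives for `W/W_J`. -/
def minReps (J : Set (Fin (n + 1))) : Set W :=
  {w | ∀ i ∈ J, cs.length w < cs.length (w * cs.simple i)}


/-- The descent set of `v ∈ W` with respect to `S`, identified with subscripts. -/
def desS (v : W) : Set (Fin (n + 1)) :=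
  {i | cs.length (v * cs.simple i) < cs.length v}

/-- `τ⁻¹(w)`: the unique element of `{w, w s₀}` lying in `W^{{s₀}}`. -/
noncomputable def invTau (w : W) : W :=
  if cs.length w < cs.length (w * cs.simple 0) then w else w * cs.simple 0

/-- The symmetrized descent set of `w ∈ W⁺`, identified with subscripts. -/
def desHat (w : W) : Set (Fin (n + 1)) :=
  {i | i ≠ 0 ∧ (glen (Rsym cs) (w * (cs.simple 0 * cs.simple i)) < glen (Rsym cs) w ∨
    glen (Rsym cs) (w * (cs.simple 0 * cs.simple i)⁻¹) < glen (Rsym cs) w)}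

/-- The symmetrized weak descent (nonascent) set of `w ∈ W⁺`. -/
def nascHat (w : W) : Set (Fin (n + 1)) :=
  {i | i ≠ 0 ∧ (glen (Rsym cs) (w * (cs.simple 0 * cs.simple i)) ≤ glen (Rsym cs) w ∨
    glen (Rsym cs) (w * (cs.simple 0 * cs.simple i)⁻¹) ≤ glen (Rsym cs) w)}


open List

section Rho

variable {B : Type*} {M : CoxeterMatrix B} (cs : CoxeterSystem M W) [DecidableEq W]

local prefix:100 "s" => cs.simple
local prefix:100 "π" => cs.wordProd
local prefix:100 "ℓ" => cs.length

lemma sandwich (i : B) (z : W) : s i * (s i * z * s i) * s i = z := by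
  calc s i * (s i * z * s i) * s i
      = (s i * (s i * (z * s i))) * s i := by simp only [mul_assoc]
    _ = (z * s i) * s i := by rw [cs.simple_mul_simple_cancel_left]
    _ = z := cs.simple_mul_simple_cancel_right i

lemma conj_simple_eq_iff (i : B) (x y : W) : s i * x * s i = y ↔ x = s i * y * s i := by
  constructor
  · rintro rfl; exact (sandwich cs i x).symm
  · rintro rfl; exact sandwich cs i y

/-- The function underlying the action of a simple reflection on `W × ℤˣ`. -/
def pfun (i : B) : W × ℤˣ → W × ℤˣ :=
  fun x => (s i * x.1 * s i, if x.1 = s i then -x.2 else x.2)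

lemma pfun_pfun (i : B) (x : W × ℤˣ) : pfun cs i (pfun cs i x) = x := by
  obtain ⟨t, ε⟩ := x
  simp only [pfun]
  have h2 : (s i * t * s i = s i) ↔ (t = s i) := by
    rw [conj_simple_eq_iff]
    have : s i * s i * s i = s i := by rw [cs.simple_mul_simple_self]; group
    rw [this]
  refine Prod.ext (sandwich cs i t) ?_
  by_cases ht : t = s i
  · rw [if_pos (h2.mpr ht), if_pos ht, neg_neg]
  · rw [if_neg (fun h => ht (h2.mp h)), if_neg ht]

/-- The action of a simple reflection on `W × ℤˣ`. -/
def pequiv (i : B) : Equiv.Perm (W × ℤˣ) :=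
  ⟨pfun cs i, pfun cs i, fun x => pfun_pfun cs i x, fun x => pfun_pfun cs i x⟩

lemma pequiv_apply (i : B) (t : W) (ε : ℤˣ) :
    pequiv cs i (t, ε) = (s i * t * s i, if t = s i then -ε else ε) := rfl

lemma pequiv_liftable : M.IsLiftable (pequiv cs) := by
  intro i j
  set m := M i j with hm
  set q : W := s i * s j with hq
  have hqm : q ^ m = 1 := cs.simple_mul_simple_pow i j
  have hqinvm : (q⁻¹) ^ m = 1 := by rw [inv_pow, hqm, inv_one]
  set c : W → ℤˣ := fun t => (if t = s j then (-1 : ℤˣ) else 1) *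
      (if t = s j * s i * s j then (-1:ℤˣ) else 1) with hc
  -- single step
  have step : ∀ (t : W) (ε : ℤˣ), (pequiv cs i * pequiv cs j) (t, ε) =
      (q * t * q⁻¹, c t * ε) := by
    intro t ε
    have h0 : (pequiv cs i * pequiv cs j) (t, ε) = pequiv cs i (pequiv cs j (t, ε)) := rfl
    rw [h0, pequiv_apply, pequiv_apply]
    have hcond : (s j * t * s j = s i) ↔ (t = s j * s i * s j) := conj_simple_eq_iff cs j t (s i)
    have hfst : s i * (s j * t * s j) * s i = q * t * q⁻¹ := by
      rw [hq, mul_inv_rev, cs.inv_simple, cs.inv_simple]; group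
    refine Prod.ext hfst ?_
    simp only [hc]
    by_cases h1 : t = s j <;> by_cases h2 : t = s j * s i * s j
    · rw [if_pos (hcond.mpr h2), if_pos h1, if_pos h1, if_pos h2, neg_neg]
      simp
    · rw [if_neg (fun h => h2 (hcond.mp h)), if_pos h1, if_pos h1, if_neg h2]
      simp
    · rw [if_pos (hcond.mpr h2), if_neg h1, if_neg h1, if_pos h2]
      simp
    · rw [if_neg (fun h => h2 (hcond.mp h)), if_neg h1, if_neg h1, if_neg h2]
      simp
  -- power formula
  have pow_formula : ∀ (k : ℕ) (t : W) (ε : ℤˣ),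
      ((pequiv cs i * pequiv cs j) ^ k) (t, ε) =
      (q ^ k * t * (q⁻¹) ^ k, (∏ r ∈ Finset.range k, c (q ^ r * t * (q⁻¹) ^ r)) * ε) := by
    intro k
    induction k with
    | zero => intro t ε; simp
    | succ k ih =>
      intro t ε
      have : ((pequiv cs i * pequiv cs j) ^ (k+1)) (t, ε) =
          ((pequiv cs i * pequiv cs j) ^ k) ((pequiv cs i * pequiv cs j) (t, ε)) := by
        rw [pow_succ]; rfl
      rw [this, step, ih]
      refine Prod.ext ?_ ?_
      · show q ^ k * (q * t * q⁻¹) * (q⁻¹) ^ k = q ^ (k+1) * t * (q⁻¹) ^ (k+1)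
        have h2 : (q⁻¹) ^ k * q⁻¹ = q⁻¹ * (q⁻¹) ^ k := (Commute.pow_self q⁻¹ k).eq
        rw [pow_succ, pow_succ, h2]
        group
      · show (∏ r ∈ Finset.range k, c (q ^ r * (q * t * q⁻¹) * (q⁻¹) ^ r)) * (c t * ε) =
            (∏ r ∈ Finset.range (k+1), c (q ^ r * t * (q⁻¹) ^ r)) * ε
        rw [Finset.prod_range_succ']
        have : ∀ r, q ^ r * (q * t * q⁻¹) * (q⁻¹) ^ r = q ^ (r+1) * t * (q⁻¹) ^ (r+1) := by
          intro r
          have h2 : (q⁻¹) ^ r * q⁻¹ = q⁻¹ * (q⁻¹) ^ r := (Commute.pow_self q⁻¹ r).eq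
          rw [pow_succ, pow_succ, h2]
          group
        simp only [this]
        simp only [pow_zero, one_mul, mul_one, hc, mul_assoc]
  -- conclude
  have conj_iff : ∀ (a x y : W), (a * x * a⁻¹ = y) ↔ (x = a⁻¹ * y * a) := by
    intro a x y
    constructor
    · rintro rfl; group
    · rintro rfl; group
  have hswap : ∀ k : ℕ, s j * q ^ k = (q⁻¹) ^ k * s j := by
    intro k
    induction k with
    | zero => simp
    | succ k ih =>
      have hjq : s j * q = q⁻¹ * s j := by
        rw [hq, mul_inv_rev, cs.inv_simple, cs.inv_simple]
        group
      rw [pow_succ, pow_succ, ← mul_assoc, ih, mul_assoc, hjq, mul_assoc, ← mul_assoc]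
  apply Equiv.ext
  rintro ⟨t, ε⟩
  rw [Equiv.Perm.one_apply, pow_formula]
  set g : ℕ → ℤˣ := fun k => if (q⁻¹) ^ k = t * s j then -1 else 1 with hg
  have tcond : ∀ y : W, (t = y * s j) ↔ (y = t * s j) := by
    intro y
    constructor
    · rintro rfl; exact (cs.simple_mul_simple_cancel_right j).symm
    · rintro rfl; exact (cs.simple_mul_simple_cancel_right j).symm
  have hswap' : ∀ k : ℕ, (q⁻¹) ^ k * s j * q ^ k = (q⁻¹) ^ (2*k) * s j := by
    intro k
    rw [mul_assoc, hswap k, two_mul, pow_add, ← mul_assoc]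
  have e1 : ∀ r : ℕ, (q ^ r * t * (q⁻¹) ^ r = s j) ↔ ((q⁻¹) ^ (2*r) = t * s j) := by
    intro r
    rw [inv_pow, conj_iff, ← inv_pow, hswap', tcond]
  have e2 : ∀ r : ℕ, (q ^ r * t * (q⁻¹) ^ r = s j * s i * s j) ↔
      ((q⁻¹) ^ (2*r+1) = t * s j) := by
    intro r
    have hq' : s j * s i * s j = q⁻¹ * s j := by
      rw [hq, mul_inv_rev, cs.inv_simple, cs.inv_simple]
    rw [inv_pow, conj_iff, ← inv_pow, hq']
    have : (q⁻¹) ^ r * (q⁻¹ * s j) * q ^ r = (q⁻¹) ^ (2*r+1) * s j := by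
      rw [show (q⁻¹) ^ r * (q⁻¹ * s j) * q ^ r = (q⁻¹) ^ (r+1) * (s j * q ^ r) by
            rw [pow_succ]; group,
          hswap r, ← mul_assoc, ← pow_add, show r + 1 + r = 2*r + 1 by omega]
    rw [this, tcond]
  have factor : ∀ r : ℕ, c (q ^ r * t * (q⁻¹) ^ r) = g (2*r) * g (2*r+1) := by
    intro r
    simp only [hc, hg]
    rw [if_congr (e1 r) rfl rfl, if_congr (e2 r) rfl rfl]
  have double_prod : ∀ (N : ℕ), (∏ r ∈ Finset.range N, (g (2*r) * g (2*r+1)))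
      = ∏ k ∈ Finset.range (2*N), g k := by
    intro N
    induction N with
    | zero => simp
    | succ N ih =>
      rw [Finset.prod_range_succ, ih, show 2*(N+1) = (2*N+1)+1 by omega,
        Finset.prod_range_succ, Finset.prod_range_succ, mul_assoc]
  have gshift : ∀ k, g (m + k) = g k := by
    intro k
    simp only [hg, pow_add, hqinvm, one_mul]
  have prodg : ∏ k ∈ Finset.range (2*m), g k = 1 := by
    rw [two_mul, Finset.prod_range_add]
    simp only [gshift]
    exact Int.units_mul_self _
  rw [Finset.prod_congr rfl (fun r _ => factor r), double_prod, prodg, one_mul, hqm, hqinvm,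
    one_mul, mul_one]

/-- The reflection-sign representation of `W` on `W × ℤˣ`. -/
noncomputable def rho : W →* Equiv.Perm (W × ℤˣ) :=
  cs.lift ⟨fun i => pequiv cs i, pequiv_liftable cs⟩

lemma rho_simple (i : B) : rho cs (s i) = pequiv cs i :=
  cs.lift_apply_simple (pequiv_liftable cs) i

lemma rho_wordProd (ω : List B) (t : W) (ε : ℤˣ) :
    rho cs (π ω) (t, ε) =
      (π ω * t * (π ω)⁻¹, ((-1 : ℤˣ) ^ ((cs.rightInvSeq ω).count t)) * ε) := by
  induction ω using List.reverseRecOn generalizing t ε with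
  | nil => simp
  | append_singleton ω i ih =>
    have hπ : π (ω ++ [i]) = π ω * s i := by
      rw [wordProd_append]
      congr 1
      simp [wordProd_cons]
    have happ : rho cs (π (ω ++ [i])) (t, ε) =
        rho cs (π ω) (rho cs (s i) (t, ε)) := by
      rw [hπ, map_mul]
      rfl
    rw [happ, rho_simple, pequiv_apply, ih]
    have hris : cs.rightInvSeq (ω ++ [i])
        = (List.map (⇑(MulAut.conj (s i))) (cs.rightInvSeq ω)).concat (s i) := by
      rw [← concat_eq_append, cs.rightInvSeq_concat]
    have hcount : (cs.rightInvSeq (ω ++ [i])).count t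
        = (cs.rightInvSeq ω).count (s i * t * s i) + (if t = s i then 1 else 0) := by
      rw [hris, concat_eq_append, List.count_append]
      congr 1
      · have htf : t = (MulAut.conj (s i)) (s i * t * s i) := by
          simp only [MulAut.conj_apply, cs.inv_simple]
          exact (sandwich cs i t).symm
        conv_lhs => rw [htf]
        exact List.count_map_of_injective _ _ (MulAut.conj (s i)).injective _
      · simp only [List.count_singleton']
        by_cases h : t = s i
        · rw [if_pos h, if_pos h.symm]
        · rw [if_neg h, if_neg (fun hh => h hh.symm)]
    refine Prod.ext ?_ ?_
    · show π ω * (s i * t * s i) * (π ω)⁻¹ = π (ω ++ [i]) * t * (π (ω ++ [i]))⁻¹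
      rw [hπ, mul_inv_rev, cs.inv_simple]
      group
    · show ((-1 : ℤˣ) ^ ((cs.rightInvSeq ω).count (s i * t * s i)))
          * (if t = s i then -ε else ε)
          = ((-1 : ℤˣ) ^ ((cs.rightInvSeq (ω ++ [i])).count t)) * ε
      rw [hcount]
      by_cases h : t = s i
      · rw [if_pos h, if_pos h, pow_add, pow_one]
        simp [mul_assoc]
      · rw [if_neg h, if_neg h, add_zero]

lemma simple_mem_rightInvSeq {u : W} {i : B} (h : ℓ (u * s i) < ℓ u)
    {ω : List B} (hred : cs.IsReduced ω) (hπ : π ω = u) : s i ∈ cs.rightInvSeq ω := by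
  have hms := cs.length_mul_simple u i
  have hlen : ℓ (u * s i) + 1 = ℓ u := by omega
  obtain ⟨ω', hlen', hw'⟩ := cs.exists_reduced_word (u * s i)
  set ζ := ω'.concat i with hζ
  have hπζ : π ζ = u := by
    rw [hζ, concat_eq_append, wordProd_append, ← hw']
    have : π [i] = s i := by simp [wordProd_cons]
    rw [this, cs.simple_mul_simple_cancel_right]
  have hredζ : cs.IsReduced ζ := by
    show ℓ (π ζ) = ζ.length
    rw [hπζ, hζ, concat_eq_append, List.length_append, List.length_singleton,
      ← (show ℓ (π ω') = ω'.length from hlen'), ← hw']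
    omega
  have hred' : cs.IsReduced ω' := by
    show ℓ (π ω') = ω'.length
    exact hlen'
  have count0 : (cs.rightInvSeq ω').count (s i) = 0 := by
    by_contra hne
    have hmem : s i ∈ cs.rightInvSeq ω' := by
      rw [← List.count_pos_iff]
      omega
    have hinv := cs.isRightInversion_of_mem_rightInvSeq hred' hmem
    have h5 : ℓ (π ω' * s i) < ℓ (π ω') := hinv.2
    rw [← hw', cs.simple_mul_simple_cancel_right] at h5
    omega
  have countζ : (cs.rightInvSeq ζ).count (s i) = 1 := by
    rw [hζ, cs.rightInvSeq_concat, concat_eq_append, List.count_append]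
    have : (List.map (⇑(MulAut.conj (s i))) (cs.rightInvSeq ω')).count (s i) = 0 := by
      have hsi : s i = (MulAut.conj (s i)) (s i) := by
        rw [MulAut.conj_apply, cs.inv_simple, cs.simple_mul_simple_self, one_mul]
      have hmap := List.count_map_of_injective (cs.rightInvSeq ω') (⇑(MulAut.conj (s i)))
        (MulAut.conj (s i)).injective (s i)
      rw [← hsi] at hmap
      rw [hmap, count0]
    rw [this, List.count_singleton]
    simp
  -- transfer parity through rho
  have h1 : rho cs u (s i, (1:ℤˣ)) =
      (u * s i * u⁻¹, ((-1 : ℤˣ) ^ ((cs.rightInvSeq ω).count (s i))) * 1) := by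
    rw [← hπ, rho_wordProd]
  have h2 : rho cs u (s i, (1:ℤˣ)) =
      (u * s i * u⁻¹, ((-1 : ℤˣ) ^ ((cs.rightInvSeq ζ).count (s i))) * 1) := by
    rw [← hπζ, rho_wordProd]
  have heq : ((-1 : ℤˣ) ^ ((cs.rightInvSeq ω).count (s i)))
      = ((-1 : ℤˣ) ^ ((cs.rightInvSeq ζ).count (s i))) := by
    have := h1.symm.trans h2
    have := congrArg Prod.snd this
    simpa using this
  rw [countζ, pow_one] at heq
  have hodd : ¬ Even ((cs.rightInvSeq ω).count (s i)) := by
    intro he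
    rw [he.neg_one_pow] at heq
    exact absurd heq (by decide)
  have : (cs.rightInvSeq ω).count (s i) ≠ 0 := fun h0 => hodd (h0 ▸ Even.zero)
  rw [← List.count_pos_iff]
  omega

lemma exchange {u : W} {i : B} (h : ℓ (u * s i) < ℓ u)
    {ω : List B} (hred : cs.IsReduced ω) (hπ : π ω = u) :
    ∃ j < ω.length, π (ω.eraseIdx j) = u * s i := by
  have hmem := simple_mem_rightInvSeq cs h hred hπ
  obtain ⟨j, hj, hget⟩ := List.getElem_of_mem hmem
  rw [cs.length_rightInvSeq] at hj
  refine ⟨j, hj, ?_⟩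
  have := cs.wordProd_mul_getD_rightInvSeq ω j
  rw [List.getD_eq_getElem _ _ (by rw [cs.length_rightInvSeq]; exact hj)] at this
  rw [← this, hget, hπ]

omit [DecidableEq W] in
lemma word_length_mod_two (ω : List B) : ω.length % 2 = ℓ (π ω) % 2 := by
  induction ω with
  | nil => simp
  | cons i ω' ih =>
    have h := cs.length_mul_mod_two (s i) (π ω')
    rw [cs.length_simple] at h
    rw [wordProd_cons, h, List.length_cons]
    omega

omit [DecidableEq W] in
lemma descents_two {u : W} {i j : B} (hi : ℓ (u * s i) < ℓ u) (hj : ℓ (u * s j) < ℓ u)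
    (hne : s i ≠ s j) : ℓ (u * s i * s j) + 2 ≤ ℓ u := by
  letI := Classical.decEq W
  have hmsj := cs.length_mul_simple u j
  obtain ⟨ω', hlen', hw'⟩ := cs.exists_reduced_word (u * s j)
  have hπζ : π (ω'.concat j) = u := by
    rw [concat_eq_append, wordProd_append, ← hw']
    have : π [j] = s j := by simp [wordProd_cons]
    rw [this, cs.simple_mul_simple_cancel_right]
  have hredζ : cs.IsReduced (ω'.concat j) := by
    show ℓ (π (ω'.concat j)) = (ω'.concat j).length
    rw [hπζ, concat_eq_append, List.length_append, List.length_singleton,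
      ← (show ℓ (π ω') = ω'.length from hlen'), ← hw']
    omega
  obtain ⟨k, hk, hkerase⟩ := exchange cs hi hredζ hπζ
  rw [concat_eq_append, List.length_append, List.length_singleton] at hk
  by_cases hkl : k < ω'.length
  · have herase : (ω'.concat j).eraseIdx k = (ω'.eraseIdx k) ++ [j] := by
      rw [concat_eq_append, List.eraseIdx_append_of_lt_length hkl]
    rw [herase, wordProd_append] at hkerase
    have hj' : π [j] = s j := by simp [wordProd_cons]
    rw [hj'] at hkerase
    have : π (ω'.eraseIdx k) = u * s i * s j := by
      have := congrArg (fun z => z * s j) hkerase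
      simpa [cs.simple_mul_simple_cancel_right] using this
    have hle : ℓ (u * s i * s j) ≤ (ω'.eraseIdx k).length := by
      rw [← this]; exact cs.length_wordProd_le _
    have : (ω'.eraseIdx k).length + 1 = ω'.length := List.length_eraseIdx_add_one hkl
    have hl2 := (show ℓ (π ω') = ω'.length from hlen'); rw [← hw'] at hl2
    omega
  · have hkeq : k = ω'.length := by omega
    have herase : (ω'.concat j).eraseIdx k = ω' := by
      rw [concat_eq_append, List.eraseIdx_append_of_length_le (by omega), hkeq]
      simp
    rw [herase, ← hw'] at hkerase
    exact absurd (mul_left_cancel hkerase) hne.symm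

end Rho

section Nu

variable {n : ℕ} {M : CoxeterMatrix (Fin (n + 1))} (cs : CoxeterSystem M W)

local prefix:100 "s" => cs.simple
local prefix:100 "π" => cs.wordProd
local prefix:100 "ℓ" => cs.length

/-- The number of letters different from `0` in a word. -/
def nz (ω : List (Fin (n + 1))) : ℕ := (ω.filter (fun i => i ≠ 0)).length

noncomputable def nu' (w : W) : ℕ :=
  sInf {k | ∃ ω : List (Fin (n + 1)), cs.wordProd ω = w ∧ nz ω = k}

lemma nz_append (ω ω' : List (Fin (n+1))) : nz (ω ++ ω') = nz ω + nz ω' := by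
  simp [nz, List.filter_append]

lemma nz_cons_zero (ω : List (Fin (n+1))) : nz ((0 : Fin (n+1)) :: ω) = nz ω := by
  simp [nz]

lemma nz_cons_ne {i : Fin (n+1)} (hi : i ≠ 0) (ω : List (Fin (n+1))) :
    nz (i :: ω) = nz ω + 1 := by
  simp [nz, List.filter_cons, hi]

lemma nu'_le {w : W} {ω : List (Fin (n+1))} (hω : π ω = w) : nu' cs w ≤ nz ω :=
  Nat.sInf_le ⟨ω, hω, rfl⟩

lemma nu'_exists (w : W) : ∃ ω : List (Fin (n+1)), π ω = w ∧ nz ω = nu' cs w := by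
  have hne : {k | ∃ ω : List (Fin (n + 1)), π ω = w ∧ nz ω = k}.Nonempty := by
    obtain ⟨ω, _, hw⟩ := cs.exists_reduced_word' w
    exact ⟨nz ω, ω, hw.symm, rfl⟩
  exact Nat.sInf_mem hne

lemma exists_reduced_nz (N : ℕ) : ∀ ω : List (Fin (n+1)), ω.length ≤ N →
    ∃ ω', cs.IsReduced ω' ∧ π ω' = π ω ∧ nz ω' ≤ nz ω := by
  induction N with
  | zero =>
    intro ω hω
    have : ω = [] := List.eq_nil_of_length_eq_zero (by omega)
    subst this
    exact ⟨[], by simp [CoxeterSystem.IsReduced], rfl, le_rfl⟩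
  | succ N ih =>
    intro ω hω
    by_cases hred : cs.IsReduced ω
    · exact ⟨ω, hred, rfl, le_rfl⟩
    · have hne : ω ≠ [] := by
        rintro rfl
        exact hred (by simp [CoxeterSystem.IsReduced])
      classical
      have hlpos : 0 < ω.length := List.length_pos_iff.mpr hne
      have hP : ∃ j, ¬ cs.IsReduced (ω.take (j+1)) := by
        refine ⟨ω.length - 1, ?_⟩
        rw [show ω.length - 1 + 1 = ω.length by omega, List.take_length]
        exact hred
      set j := Nat.find hP with hjdef
      have hj : ¬ cs.IsReduced (ω.take (j+1)) := Nat.find_spec hP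
      have hjlt : j + 1 ≤ ω.length := by
        have : j ≤ ω.length - 1 := Nat.find_le (by
          rw [show ω.length - 1 + 1 = ω.length by omega, List.take_length]
          exact hred)
        omega
      have hjl : j < ω.length := by omega
      have hredj : cs.IsReduced (ω.take j) := by
        rcases Nat.eq_zero_or_pos j with h0 | h0
        · rw [h0]
          simp [CoxeterSystem.IsReduced]
        · have := Nat.find_min hP (show j - 1 < j by omega)
          rw [not_not] at this
          rwa [show j - 1 + 1 = j by omega] at this
      set σ := ω.take j with hσdef
      set a := ω[j] with hadef
      have htake : ω.take (j+1) = σ ++ [a] := by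
        rw [hσdef, List.take_succ, hadef]
        congr 1
        rw [List.getElem?_eq_getElem hjl]
        rfl
      have hσlen : σ.length = j := by
        rw [hσdef, List.length_take]
        omega
      have hπt : π (ω.take (j+1)) = π σ * s a := by
        rw [htake, wordProd_append]
        congr 1
        simp [wordProd_cons]
      have hdesc : ℓ (π σ * s a) < ℓ (π σ) := by
        have hlred : ℓ (π σ) = j := by
          have := hredj
          rw [CoxeterSystem.IsReduced] at this
          rw [this, hσlen]
        have hub : ℓ (π (ω.take (j+1))) ≤ j + 1 := by
          have := cs.length_wordProd_le (ω.take (j+1))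
          rwa [List.length_take, min_eq_left hjlt] at this
        have hneq : ℓ (π (ω.take (j+1))) ≠ j + 1 := by
          intro hcontra
          apply hj
          rw [CoxeterSystem.IsReduced, hcontra, List.length_take, min_eq_left hjlt]
        have hmod : (j+1) % 2 = ℓ (π (ω.take (j+1))) % 2 := by
          have := word_length_mod_two cs (ω.take (j+1))
          rwa [List.length_take, min_eq_left hjlt] at this
        rw [← hπt, hlred]
        omega
      letI := Classical.decEq W
      obtain ⟨k, hk, hkerase⟩ := exchange cs hdesc hredj rfl
      set ω'' := σ.eraseIdx k ++ ω.drop (j+1) with hω''def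
      have hπ'' : π ω'' = π ω := by
        conv_rhs => rw [← List.take_append_drop (j+1) ω]
        rw [hω''def, wordProd_append, wordProd_append, hkerase, hπt]
      have hklen : (σ.eraseIdx k).length + 1 = σ.length := List.length_eraseIdx_add_one hk
      have hlen'' : ω''.length ≤ N := by
        rw [hω''def, List.length_append, List.length_drop]
        omega
      have hnz'' : nz ω'' ≤ nz ω := by
        have e1 : nz ω = nz (ω.take (j+1)) + nz (ω.drop (j+1)) := by
          conv_lhs => rw [← List.take_append_drop (j+1) ω]
          exact nz_append _ _
        have e2 : nz (ω.take (j+1)) = nz σ + nz [a] := by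
          rw [htake, nz_append]
        have e3 : nz (σ.eraseIdx k) ≤ nz σ := by
          have hsub : (σ.eraseIdx k).filter (fun i => i ≠ 0) <+ σ.filter (fun i => i ≠ 0) :=
            (List.eraseIdx_sublist σ k).filter _
          exact hsub.length_le
        rw [hω''def, nz_append]
        omega
      obtain ⟨ω', h1, h2, h3⟩ := ih ω'' hlen''
      exact ⟨ω', h1, h2.trans hπ'', h3.trans hnz''⟩

lemma nu'_mul_simple_le {u : W} {i : Fin (n+1)} (h : ℓ (u * s i) < ℓ u) :
    nu' cs (u * s i) ≤ nu' cs u := by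
  obtain ⟨ω₀, hπ₀, hnz₀⟩ := nu'_exists cs u
  obtain ⟨ω, hredω, hπω, hnzω⟩ := exists_reduced_nz cs ω₀.length ω₀ le_rfl
  rw [hπ₀] at hπω
  letI := Classical.decEq W
  obtain ⟨k, hk, hkerase⟩ := exchange cs h hredω hπω
  have hle : nu' cs (u * s i) ≤ nz (ω.eraseIdx k) := nu'_le cs hkerase
  have : nz (ω.eraseIdx k) ≤ nz ω := by
    have hsub : (ω.eraseIdx k).filter (fun i => i ≠ 0) <+ ω.filter (fun i => i ≠ 0) :=
      (List.eraseIdx_sublist ω k).filter _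
    exact hsub.length_le
  omega

lemma nu'_mul_s0 (w : W) : nu' cs (w * s 0) = nu' cs w := by
  have key : ∀ u : W, nu' cs (u * s 0) ≤ nu' cs u := by
    intro u
    obtain ⟨ω, hπ, hnz⟩ := nu'_exists cs u
    have hπ' : π (ω ++ [0]) = u * s 0 := by
      rw [wordProd_append, hπ]
      congr 1
      simp [wordProd_cons]
    have := nu'_le cs hπ'
    rw [nz_append] at this
    have h0 : nz [(0 : Fin (n+1))] = 0 := by simp [nz]
    omega
  have h1 := key w
  have h2 := key (w * s 0)
  rw [cs.simple_mul_simple_cancel_right] at h2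
  omega

end Nu

section Glen

variable {n : ℕ} {M : CoxeterMatrix (Fin (n + 1))} (cs : CoxeterSystem M W)

local prefix:100 "s" => cs.simple
local prefix:100 "π" => cs.wordProd
local prefix:100 "ℓ" => cs.length

lemma nu_eq_nu' (w : W) : nu cs w = nu' cs w := rfl

lemma mem_Rsym_left {i : Fin (n+1)} (hi : i ≠ 0) : s 0 * s i ∈ Rsym cs :=
  Or.inl ⟨i, hi, rfl⟩

lemma mem_Rsym_right {i : Fin (n+1)} (hi : i ≠ 0) : s i * s 0 ∈ Rsym cs := by
  right
  show (s i * s 0)⁻¹ ∈ Rset cs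
  rw [mul_inv_rev, cs.inv_simple, cs.inv_simple]
  exact ⟨i, hi, rfl⟩

lemma Rsym_cases {x : W} (hx : x ∈ Rsym cs) :
    ∃ i : Fin (n+1), i ≠ 0 ∧ (x = s 0 * s i ∨ x = s i * s 0) := by
  rcases hx with h | h
  · obtain ⟨i, hi, hxe⟩ := h
    exact ⟨i, hi, Or.inl hxe⟩
  · obtain ⟨i, hi, hxe⟩ := h
    refine ⟨i, hi, Or.inr ?_⟩
    have : x⁻¹ = s 0 * s i := hxe
    rw [← inv_inv x, this, mul_inv_rev, cs.inv_simple, cs.inv_simple]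

lemma rsym_word_of_word (ω : List (Fin (n+1))) :
    ∃ l : List W, (∀ x ∈ l, x ∈ Rsym cs) ∧ l.length = nz ω ∧
      l.prod = (s 0) ^ (ω.length % 2) * π ω := by
  induction ω with
  | nil => exact ⟨[], by simp, by simp [nz], by simp⟩
  | cons i ω' ih =>
    obtain ⟨l', hmem, hlen, hprod⟩ := ih
    have hpar : ω'.length % 2 = 0 ∨ ω'.length % 2 = 1 := by omega
    by_cases hi : i = 0
    · subst hi
      refine ⟨l', hmem, by rw [nz_cons_zero]; exact hlen, ?_⟩
      rw [wordProd_cons, List.length_cons, hprod]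
      rcases hpar with h | h
      · rw [h, show (ω'.length + 1) % 2 = 1 by omega, pow_zero, pow_one, one_mul,
          cs.simple_mul_simple_cancel_left]
      · rw [h, show (ω'.length + 1) % 2 = 0 by omega, pow_zero, pow_one, one_mul]
    · rcases hpar with h | h
      · refine ⟨(s 0 * s i) :: l', ?_, ?_, ?_⟩
        · intro x hx
          rcases List.mem_cons.mp hx with rfl | hx'
          · exact mem_Rsym_left cs hi
          · exact hmem x hx'
        · rw [List.length_cons, nz_cons_ne hi, hlen]
        · rw [List.prod_cons, hprod, h, pow_zero, one_mul, List.length_cons,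
            show (ω'.length + 1) % 2 = 1 by omega, pow_one, wordProd_cons, mul_assoc]
      · refine ⟨(s i * s 0) :: l', ?_, ?_, ?_⟩
        · intro x hx
          rcases List.mem_cons.mp hx with rfl | hx'
          · exact mem_Rsym_right cs hi
          · exact hmem x hx'
        · rw [List.length_cons, nz_cons_ne hi, hlen]
        · rw [List.prod_cons, hprod, h, pow_one, List.length_cons,
            show (ω'.length + 1) % 2 = 0 by omega, pow_zero, one_mul, wordProd_cons,
            ← mul_assoc, mul_assoc (s i), cs.simple_mul_simple_self, mul_one]

lemma nz_cons_ne' {i : Fin (n+1)} (hi : i ≠ 0) (ω : List (Fin (n+1))) :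
    nz (i :: ω) = nz ω + 1 := nz_cons_ne hi ω

lemma glen_le_nz {w : W} (hw : w ∈ alt cs) {ω : List (Fin (n+1))} (hπ : π ω = w) :
    glen (Rsym cs) w ≤ nz ω := by
  have heven : Even (ℓ w) := hw
  have hmod : ω.length % 2 = 0 := by
    have h1 := word_length_mod_two cs ω
    rw [hπ] at h1
    rw [Nat.even_iff] at heven
    omega
  obtain ⟨l, hmem, hlen, hprod⟩ := rsym_word_of_word cs ω
  rw [hmod, pow_zero, one_mul, hπ] at hprod
  exact Nat.sInf_le ⟨l, hmem, hprod, hlen⟩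

lemma word_of_rsym_list : ∀ l : List W, (∀ x ∈ l, x ∈ Rsym cs) →
    ∃ ω : List (Fin (n+1)), π ω = l.prod ∧ nz ω = l.length := by
  intro l
  induction l with
  | nil => exact fun _ => ⟨[], by simp, by simp [nz]⟩
  | cons x l' ih =>
    intro hmem
    obtain ⟨ωt, hπt, hnzt⟩ := ih (fun y hy => hmem y (List.mem_cons_of_mem x hy))
    obtain ⟨i, hi, hx⟩ := Rsym_cases cs (hmem x List.mem_cons_self)
    rcases hx with rfl | rfl
    · refine ⟨0 :: i :: ωt, ?_, ?_⟩
      · rw [wordProd_cons, wordProd_cons, hπt, List.prod_cons, mul_assoc]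
      · rw [nz_cons_zero, nz_cons_ne hi, hnzt, List.length_cons]
    · refine ⟨i :: 0 :: ωt, ?_, ?_⟩
      · rw [wordProd_cons, wordProd_cons, hπt, List.prod_cons, mul_assoc]
      · rw [nz_cons_ne hi, nz_cons_zero, hnzt, List.length_cons]

lemma glen_eq_nu {w : W} (hw : w ∈ alt cs) : glen (Rsym cs) w = nu cs w := by
  rw [nu_eq_nu']
  apply _root_.le_antisymm
  · obtain ⟨ω, hπ, hnz⟩ := nu'_exists cs w
    have := glen_le_nz cs hw hπ
    omega
  · have hne : {k | ∃ l : List W, (∀ x ∈ l, x ∈ Rsym cs) ∧ l.prod = w ∧ l.length = k}.Nonempty := by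
      obtain ⟨ω, hred, hπ⟩ := cs.exists_reduced_word' w
      have heven : Even (ℓ w) := hw
      have hmod : ω.length % 2 = 0 := by
        have h1 := word_length_mod_two cs ω
        rw [← hπ] at h1
        rw [Nat.even_iff] at heven
        omega
      obtain ⟨l, hmem, hlen, hprod⟩ := rsym_word_of_word cs ω
      rw [hmod, pow_zero, one_mul, ← hπ] at hprod
      exact ⟨l.length, l, hmem, hprod, rfl⟩
    have hmemInf : glen (Rsym cs) w ∈ {k | ∃ l : List W, (∀ x ∈ l, x ∈ Rsym cs) ∧
        l.prod = w ∧ l.length = k} := Nat.sInf_mem hne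
    obtain ⟨l, hmem, hprod, hlen⟩ := hmemInf
    obtain ⟨ω, hπ, hnz⟩ := word_of_rsym_list cs l hmem
    rw [hprod] at hπ
    have := nu'_le cs hπ
    omega

end Glen

section Assembly

variable {n : ℕ} {M : CoxeterMatrix (Fin (n + 1))} (cs : CoxeterSystem M W)

local prefix:100 "s" => cs.simple
local prefix:100 "π" => cs.wordProd
local prefix:100 "ℓ" => cs.length

/-- The homomorphism counting the parity of occurrences of `s₀`, for evenly laced `s₀`. -/
noncomputable def phi (hEL : EvenlyLaced M) : W →* ℤˣ :=
  cs.lift ⟨fun i => if i = 0 then (-1 : ℤˣ) else 1, by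
    intro i j
    beta_reduce
    by_cases hi : i = 0 <;> by_cases hj : j = 0
    · subst hi; subst hj
      norm_num
    · subst hi
      rw [if_pos rfl, if_neg hj, mul_one]
      exact (hEL j hj).neg_one_pow
    · subst hj
      rw [if_neg hi, if_pos rfl, one_mul, M.symmetric i 0]
      exact (hEL i hi).neg_one_pow
    · rw [if_neg hi, if_neg hj, one_mul, one_pow]⟩

lemma phi_simple (hEL : EvenlyLaced M) (i : Fin (n+1)) :
    phi cs hEL (s i) = if i = 0 then (-1 : ℤˣ) else 1 :=
  cs.lift_apply_simple _ i

lemma phi_pow_nz (hEL : EvenlyLaced M) (ω : List (Fin (n+1))) :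
    phi cs hEL (π ω) * (-1 : ℤˣ) ^ (nz ω) = (-1) ^ ω.length := by
  induction ω with
  | nil => simp [nz]
  | cons i ω' ih =>
    rw [wordProd_cons, map_mul, phi_simple, List.length_cons]
    by_cases hi : i = 0
    · subst hi
      rw [if_pos rfl, nz_cons_zero, pow_succ, mul_assoc, ih, mul_comm]
    · rw [if_neg hi, nz_cons_ne hi, one_mul, pow_succ, ← mul_assoc, ih, pow_succ]

lemma neg_one_pow_mod {a b : ℕ} (h : a % 2 = b % 2) : ((-1 : ℤˣ)) ^ a = (-1) ^ b := by
  rcases Nat.even_or_odd a with ha | ha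
  · have hb : Even b := by rw [Nat.even_iff] at *; omega
    rw [ha.neg_one_pow, hb.neg_one_pow]
  · have hb : Odd b := by rw [Nat.odd_iff] at *; omega
    rw [ha.neg_one_pow, hb.neg_one_pow]

lemma nu_parity (hEL : EvenlyLaced M) (w : W) :
    phi cs hEL w * (-1 : ℤˣ) ^ (nu' cs w) = (-1) ^ (ℓ w) := by
  obtain ⟨ω, hπ, hnz⟩ := nu'_exists cs w
  have h1 := phi_pow_nz cs hEL ω
  rw [hπ, hnz] at h1
  have h2 : ω.length % 2 = (ℓ w) % 2 := by rw [word_length_mod_two cs ω, hπ]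
  rw [h1]
  exact neg_one_pow_mod h2

lemma nu_mul_simple_ne (hEL : EvenlyLaced M) {i : Fin (n+1)} (hi : i ≠ 0) (u : W) :
    nu' cs (u * s i) ≠ nu' cs u := by
  intro heq
  have h1 := nu_parity cs hEL u
  have h2 := nu_parity cs hEL (u * s i)
  rw [map_mul, phi_simple, if_neg hi, mul_one, heq] at h2
  have hms := cs.length_mul_simple u i
  have hpow : ((-1 : ℤˣ)) ^ (ℓ (u * s i)) = -(-1) ^ (ℓ u) := by
    rcases hms with h | h
    · rw [h, pow_succ, mul_neg_one]
    · rw [← h, pow_succ, mul_neg_one, neg_neg]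
  rw [hpow, h1] at h2
  set z : ℤˣ := (-1 : ℤˣ) ^ (ℓ u) with hz
  rcases Int.units_eq_one_or z with h | h <;> rw [h] at h2 <;> exact absurd h2 (by decide)

lemma simple_zero_ne (hEL : EvenlyLaced M) {i : Fin (n+1)} (hi : i ≠ 0) : s 0 ≠ s i := by
  intro heq
  have := congrArg (phi cs hEL) heq
  rw [phi_simple, phi_simple, if_pos rfl, if_neg hi] at this
  exact absurd this (by decide)

lemma alt_pair (i j : Fin (n+1)) : s i * s j ∈ alt cs := by
  show Even (ℓ (s i * s j))
  rw [Nat.even_iff]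
  have := cs.length_mul_mod_two (s i) (s j)
  rw [cs.length_simple, cs.length_simple] at this
  omega

-- ascent lemma: L4
lemma nu_le_of_ascent {v : W} {i : Fin (n+1)} (hasc : ℓ v < ℓ (v * s i)) :
    nu' cs v ≤ nu' cs (v * s i) := by
  have h : ℓ (v * s i * s i) < ℓ (v * s i) := by
    rwa [cs.simple_mul_simple_cancel_right]
  have := nu'_mul_simple_le cs h
  rwa [cs.simple_mul_simple_cancel_right] at this

-- L5
lemma nu_le_of_ascent' (hEL : EvenlyLaced M) {v : W} {i : Fin (n+1)} (hi : i ≠ 0)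
    (hv0 : ℓ v < ℓ (v * s 0)) (hasc : ℓ v < ℓ (v * s i)) :
    nu' cs v ≤ nu' cs (v * s 0 * s i) := by
  have hms0 := cs.length_mul_simple v 0
  have hlv0 : ℓ (v * s 0) = ℓ v + 1 := by omega
  by_cases hasc2 : ℓ (v * s 0) < ℓ (v * s 0 * s i)
  · have h : ℓ (v * s 0 * s i * s i) < ℓ (v * s 0 * s i) := by
      rwa [cs.simple_mul_simple_cancel_right]
    have h2 := nu'_mul_simple_le cs h
    rw [cs.simple_mul_simple_cancel_right] at h2
    have h3 := nu'_mul_s0 cs v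
    omega
  · exfalso
    have hne := cs.length_mul_simple_ne (v * s 0) i
    have hdesc2 : ℓ (v * s 0 * s i) < ℓ (v * s 0) := by omega
    have hdesc0 : ℓ (v * s 0 * s 0) < ℓ (v * s 0) := by
      rw [cs.simple_mul_simple_cancel_right, hlv0]
      omega
    have := descents_two cs hdesc0 hdesc2 (simple_zero_ne cs hEL hi)
    rw [cs.simple_mul_simple_cancel_right] at this
    omega

-- part 1 core
lemma main_one {w v : W} (hw : w ∈ alt cs) (hv0 : ℓ v < ℓ (v * s 0))
    (hcase : w = v ∨ w = v * s 0) {i : Fin (n+1)} (hdesc : ℓ (v * s i) < ℓ v) :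
    i ∈ nascHat cs w := by
  have hBle : nu' cs (v * s i) ≤ nu' cs v := nu'_mul_simple_le cs hdesc
  rcases hcase with rfl | rfl
  · have hi0 : i ≠ 0 := by
      rintro rfl
      omega
    refine ⟨hi0, Or.inr ?_⟩
    have harg : w * (s 0 * s i)⁻¹ = w * s i * s 0 := by
      rw [mul_inv_rev, cs.inv_simple, cs.inv_simple, ← mul_assoc]
    have hm : w * s i * s 0 ∈ alt cs := by
      rw [show w * s i * s 0 = w * (s i * s 0) by rw [mul_assoc]]
      exact Subgroup.mul_mem _ hw (alt_pair cs i 0)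
    rw [harg, glen_eq_nu cs hm, glen_eq_nu cs hw, nu_eq_nu', nu_eq_nu', nu'_mul_s0]
    exact hBle
  · have hi0 : i ≠ 0 := by
      rintro rfl
      omega
    refine ⟨hi0, Or.inl ?_⟩
    have harg : v * s 0 * (s 0 * s i) = v * s i := by
      rw [mul_assoc, cs.simple_mul_simple_cancel_left]
    have hm : v * s i ∈ alt cs := by
      rw [← harg]
      exact Subgroup.mul_mem _ hw (alt_pair cs 0 i)
    rw [harg, glen_eq_nu cs hm, glen_eq_nu cs hw, nu_eq_nu', nu_eq_nu', nu'_mul_s0]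
    exact hBle

-- part 2 core
lemma main_two (hEL : EvenlyLaced M) {w v : W} (hw : w ∈ alt cs)
    (hv0 : ℓ v < ℓ (v * s 0)) (hcase : w = v ∨ w = v * s 0) (i : Fin (n+1)) :
    (i ≠ 0 ∧ (glen (Rsym cs) (w * (s 0 * s i)) < glen (Rsym cs) w ∨
      glen (Rsym cs) (w * (s 0 * s i)⁻¹) < glen (Rsym cs) w)) ↔ ℓ (v * s i) < ℓ v := by
  have hinv : (s 0 * s i)⁻¹ = s i * s 0 := by
    rw [mul_inv_rev, cs.inv_simple, cs.inv_simple]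
  have hmem1 : w * (s 0 * s i) ∈ alt cs := Subgroup.mul_mem _ hw (alt_pair cs 0 i)
  have hmem2 : w * (s 0 * s i)⁻¹ ∈ alt cs :=
    Subgroup.mul_mem _ hw (Subgroup.inv_mem _ (alt_pair cs 0 i))
  rcases hcase with rfl | rfl
  · have hg0 : glen (Rsym cs) w = nu' cs w := by rw [glen_eq_nu cs hw, nu_eq_nu']
    have harg2 : w * (s 0 * s i)⁻¹ = w * s i * s 0 := by
      rw [hinv, ← mul_assoc]
    have hm2 : w * s i * s 0 ∈ alt cs := harg2 ▸ hmem2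
    have hg1 : glen (Rsym cs) (w * (s 0 * s i)) = nu' cs (w * s 0 * s i) := by
      rw [show w * (s 0 * s i) = w * s 0 * s i by rw [mul_assoc], glen_eq_nu cs
        (by rw [← show w * (s 0 * s i) = w * s 0 * s i by rw [mul_assoc]]; exact hmem1),
        nu_eq_nu']
    have hg2 : glen (Rsym cs) (w * (s 0 * s i)⁻¹) = nu' cs (w * s i) := by
      rw [harg2, glen_eq_nu cs hm2, nu_eq_nu', nu'_mul_s0]
    rw [hg0, hg1, hg2]
    constructor
    · rintro ⟨hi0, hlt⟩
      by_contra hnlt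
      have hne := cs.length_mul_simple_ne w i
      have hasc : ℓ w < ℓ (w * s i) := by omega
      have h4 := nu_le_of_ascent cs hasc
      have h5 := nu_le_of_ascent' cs hEL hi0 hv0 hasc
      omega
    · intro hdesc
      have hi0 : i ≠ 0 := by
        rintro rfl
        omega
      have hlt := lt_of_le_of_ne (nu'_mul_simple_le cs hdesc) (nu_mul_simple_ne cs hEL hi0 w)
      exact ⟨hi0, Or.inr hlt⟩
  · have hg0 : glen (Rsym cs) (v * s 0) = nu' cs v := by
      rw [glen_eq_nu cs hw, nu_eq_nu', nu'_mul_s0]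
    have harg1 : v * s 0 * (s 0 * s i) = v * s i := by
      rw [mul_assoc, cs.simple_mul_simple_cancel_left]
    have hm1 : v * s i ∈ alt cs := harg1 ▸ hmem1
    have hg1 : glen (Rsym cs) (v * s 0 * (s 0 * s i)) = nu' cs (v * s i) := by
      rw [harg1, glen_eq_nu cs hm1, nu_eq_nu']
    have harg2 : v * s 0 * (s 0 * s i)⁻¹ = v * s 0 * s i * s 0 := by
      rw [hinv, ← mul_assoc]
    have hm2 : v * s 0 * s i * s 0 ∈ alt cs := harg2 ▸ hmem2
    have hg2 : glen (Rsym cs) (v * s 0 * (s 0 * s i)⁻¹) = nu' cs (v * s 0 * s i) := by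
      rw [harg2, glen_eq_nu cs hm2, nu_eq_nu', nu'_mul_s0]
    rw [hg0, hg1, hg2]
    constructor
    · rintro ⟨hi0, hlt⟩
      by_contra hnlt
      have hne := cs.length_mul_simple_ne v i
      have hasc : ℓ v < ℓ (v * s i) := by omega
      have h4 := nu_le_of_ascent cs hasc
      have h5 := nu_le_of_ascent' cs hEL hi0 hv0 hasc
      omega
    · intro hdesc
      have hi0 : i ≠ 0 := by
        rintro rfl
        omega
      have hlt := lt_of_le_of_ne (nu'_mul_simple_le cs hdesc) (nu_mul_simple_ne cs hEL hi0 v)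
      exact ⟨hi0, Or.inl hlt⟩

end Assembly

/-- For arbitrary `s₀`, `Des_S(τ⁻¹(w)) ⊆ Nasc-hat_R(w)`; when `s₀` is evenly
laced, `Des-hat_R(w) = Des_S(τ⁻¹(w))`. -/
theorem statement13 :
    (∀ w ∈ alt cs, desS cs (invTau cs w) ⊆ nascHat cs w) ∧
    (EvenlyLaced M → ∀ w ∈ alt cs, desHat cs w = desS cs (invTau cs w)) := by
  have hsetup : ∀ w : W, cs.length (invTau cs w) < cs.length (invTau cs w * cs.simple 0) ∧
      (w = invTau cs w ∨ w = invTau cs w * cs.simple 0) := by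
    intro w
    have hne := cs.length_mul_simple_ne w 0
    have hms := cs.length_mul_simple w 0
    by_cases h : cs.length w < cs.length (w * cs.simple 0)
    · rw [invTau, if_pos h]
      exact ⟨h, Or.inl rfl⟩
    · rw [invTau, if_neg h]
      constructor
      · rw [cs.simple_mul_simple_cancel_right]
        omega
      · right
        rw [cs.simple_mul_simple_cancel_right]
  constructor
  · intro w hw i hi
    obtain ⟨hv0, hcase⟩ := hsetup w
    exact main_one cs hw hv0 hcase hi
  · intro hEL w hw
    ext i
    obtain ⟨hv0, hcase⟩ := hsetup w
    show (i ∈ desHat cs w) ↔ (i ∈ desS cs (invTau cs w))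
    exact main_two cs hEL hw hv0 hcase i

end AltCox
end

section
/- Let (W,S) be a Coxeter system with s_0 an even leaf, W' = ker χ_0 with its Coxeter structure (W',S'), and let θ: W^+ → W' be the bijection sending w to the unique element of {w, w s_0} in W'. Then for every w ∈ W^+: (i) ℓ_{R∪R^{-1}}(w) = ℓ_{S'}(θ(w)); (ii) θ is a poset isomorphism from (W^+, right weak order) to (W', right weak order); (iii) θ is a poset isomorphism from (W^+, right strong order) to (W', strong Bruhat order). -/
open CoxeterSystem

namespace AltCox

variable {W : Type*} [Group W]

variable {n : ℕ} {M : CoxeterMatrix (Fin (n + 1))} (cs : CoxeterSystem M W)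

/-- `θ(w)`: the unique element of `{w, w s₀}` lying in `W' = ker χ₀`. -/
noncomputable def theta {W : Type*} [Group W] (χ₀ : W →* ℤˣ) (s0 w : W) : W :=
  if χ₀ w = 1 then w else w * s0

section Aux

variable {W : Type*} [Group W] {n : ℕ} {M : CoxeterMatrix (Fin (n + 2))}

/-- generator indexed by nonzero simple index and a direction. -/
def rElt (cs : CoxeterSystem M W) (i : Fin (n + 1)) (d : Bool) : W :=
  if d then cs.simple 0 * cs.simple i.succ else cs.simple i.succ * cs.simple 0

def gOf (i : Fin (n + 1)) (e : Bool) : Fin (n + 1) ⊕ Unit :=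
  if e ∧ i = 0 then Sum.inr () else Sum.inl i

def iOf : Fin (n + 1) ⊕ Unit → Fin (n + 1)
  | Sum.inl i => i
  | Sum.inr _ => 0

def eOf : Fin (n + 1) ⊕ Unit → Bool
  | Sum.inl _ => false
  | Sum.inr _ => true

@[simp] lemma gOf_iOf_eOf (g : Fin (n + 1) ⊕ Unit) : gOf (iOf g) (eOf g) = g := by
  cases g with
  | inl i => simp [gOf, iOf, eOf]
  | inr u => simp [gOf, iOf, eOf]

def rprod (cs : CoxeterSystem M W) (c : List (Fin (n + 1) × Bool)) : W :=
  (c.map fun p => rElt cs p.1 p.2).prod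

def gword : Bool → List (Fin (n + 1) × Bool) → List (Fin (n + 1) ⊕ Unit)
  | _, [] => []
  | b, p :: t => gOf p.1 (p.2 == b) :: gword (!b) t

def rword : Bool → List (Fin (n + 1) ⊕ Unit) → List (Fin (n + 1) × Bool)
  | _, [] => []
  | b, g :: t => (iOf g, eOf g == b) :: rword (!b) t

@[simp] lemma beq_beq (x b : Bool) : ((x == b) == b) = x := by cases x <;> cases b <;> rfl

@[simp] lemma gword_rword (b : Bool) (ω : List (Fin (n + 1) ⊕ Unit)) :
    gword b (rword b ω) = ω := by
  induction ω generalizing b with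
  | nil => rfl
  | cons g t ih => simp [rword, gword, ih]

@[simp] lemma gword_length (b : Bool) (c : List (Fin (n + 1) × Bool)) :
    (gword b c).length = c.length := by
  induction c generalizing b with
  | nil => rfl
  | cons p t ih => simp [gword, ih]

@[simp] lemma rword_length (b : Bool) (ω : List (Fin (n + 1) ⊕ Unit)) :
    (rword b ω).length = ω.length := by
  induction ω generalizing b with
  | nil => rfl
  | cons g t ih => simp [rword, ih]

lemma gword_append (c₁ c₂ : List (Fin (n + 1) × Bool)) (b : Bool) :
    gword b (c₁ ++ c₂) = gword b c₁ ++ gword (if Odd c₁.length then !b else b) c₂ := by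
  induction c₁ generalizing b with
  | nil => simp [gword]
  | cons p t ih =>
      by_cases h : Odd t.length <;>
        simp [gword, ih, Nat.odd_add_one, h]

lemma rword_append (ω₁ ω₂ : List (Fin (n + 1) ⊕ Unit)) (b : Bool) :
    rword b (ω₁ ++ ω₂) = rword b ω₁ ++ rword (if Odd ω₁.length then !b else b) ω₂ := by
  induction ω₁ generalizing b with
  | nil => simp [rword]
  | cons p t ih =>
      by_cases h : Odd t.length <;>
        simp [rword, ih, Nat.odd_add_one, h]

lemma palindrome_rec {α : Type*} {l : List α} {k : ℕ} (h : l.reverse = l)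
    (hlen : l.length = k + 2) :
    ∃ a m, l = a :: (m ++ [a]) ∧ m.reverse = m ∧ m.length = k := by
  cases l with
  | nil => simp at hlen
  | cons a t =>
      have ht : t ≠ [] := by
        intro h'; subst h'; simp at hlen
      obtain ⟨m, b, rfl⟩ := List.eq_nil_or_concat t |>.resolve_left ht
      rw [List.concat_eq_append] at h hlen ⊢
      have hrev : b :: (m.reverse ++ [a]) = a :: (m ++ [b]) := by
        simpa [List.reverse_append] using h
      have hba : b = a := by injection hrev
      have h2 : m.reverse ++ [a] = m ++ [b] := by injection hrev
      cases hba
      have hm : m.reverse = m := List.append_cancel_right h2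
      refine ⟨a, m, rfl, hm, ?_⟩
      simpa using hlen

variable (cs : CoxeterSystem M W) (χ₀ : W →* ℤˣ)

/-- `true` iff `χ₀ a = 1`. -/
noncomputable def sgn (a : W) : Bool := decide (χ₀ a = 1)

lemma chi_cases (a : W) : χ₀ a = 1 ∨ χ₀ a = -1 := Int.units_eq_one_or _

lemma sgn_eq_true {a : W} (h : χ₀ a = 1) : sgn χ₀ a = true := by
  simp [sgn, h]

lemma sgn_eq_false {a : W} (h : χ₀ a = -1) : sgn χ₀ a = false := by
  simp [sgn, h]

lemma theta_of_pos {a : W} (h : χ₀ a = 1) (s0 : W) : theta χ₀ s0 a = a := by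
  simp [theta, h]

lemma theta_of_neg {a : W} (h : χ₀ a = -1) (s0 : W) : theta χ₀ s0 a = a * s0 := by
  simp [theta, h]

variable (hχ0 : χ₀ (cs.simple 0) = -1)
  (hχj : ∀ j : Fin (n + 2), j ≠ 0 → χ₀ (cs.simple j) = 1)

include hχ0 in
lemma chi_theta (a : W) : χ₀ (theta χ₀ (cs.simple 0) a) = 1 := by
  rcases chi_cases χ₀ a with h | h
  · rw [theta_of_pos χ₀ h, h]
  · rw [theta_of_neg χ₀ h, map_mul, h, hχ0]
    decide

/-- `θ` as a map into `ker χ₀`. -/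
noncomputable def Th (a : W) : χ₀.ker :=
  ⟨theta χ₀ (cs.simple 0) a, chi_theta cs χ₀ hχ0 a⟩

@[simp] lemma coe_Th (a : W) : (Th cs χ₀ hχ0 a : W) = theta χ₀ (cs.simple 0) a := rfl

include hχ0 hχj in
lemma chi_rElt (i : Fin (n + 1)) (d : Bool) : χ₀ (rElt cs i d) = -1 := by
  have h1 := hχj i.succ (Fin.succ_ne_zero i)
  cases d <;> simp [rElt, map_mul, hχ0, h1]

include hχ0 hχj in
lemma sgn_mul_rElt (a : W) (i : Fin (n + 1)) (d : Bool) :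
    sgn χ₀ (a * rElt cs i d) = !sgn χ₀ a := by
  have h := chi_rElt cs χ₀ hχ0 hχj i d
  rcases chi_cases χ₀ a with h1 | h1 <;>
    simp [sgn, map_mul, h, h1]

@[simp] lemma sgn_one : sgn χ₀ (1 : W) = true := by simp [sgn]

@[simp] lemma Th_one : Th cs χ₀ hχ0 (1 : W) = 1 := by
  apply Subtype.ext
  simp [theta]

lemma rElt_mem_Rsym (i : Fin (n + 1)) (d : Bool) : rElt cs i d ∈ Rsym cs := by
  cases d with
  | true => exact Or.inl ⟨i.succ, Fin.succ_ne_zero i, rfl⟩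
  | false =>
      refine Or.inr (Set.mem_inv.mpr ⟨i.succ, Fin.succ_ne_zero i, ?_⟩)
      simp [rElt, mul_inv_rev, cs.inv_simple]

lemma mem_Rsym_iff {x : W} :
    x ∈ Rsym cs ↔ ∃ p : Fin (n + 1) × Bool, x = rElt cs p.1 p.2 := by
  constructor
  · rintro (⟨j, hj, rfl⟩ | hx)
    · exact ⟨(j.pred hj, true), by simp [rElt, Fin.succ_pred]⟩
    · obtain ⟨j, hj, hx'⟩ := Set.mem_inv.mp hx
      refine ⟨(j.pred hj, false), ?_⟩
      have hxx : x = (cs.simple 0 * cs.simple j)⁻¹ := by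
        rw [← hx']; simp
      rw [hxx]
      simp [rElt, mul_inv_rev, cs.inv_simple, Fin.succ_pred]
  · rintro ⟨p, rfl⟩; exact rElt_mem_Rsym cs p.1 p.2

open scoped Classical in
noncomputable def enc (x : W) : Fin (n + 1) × Bool :=
  if h : ∃ p : Fin (n + 1) × Bool, x = rElt cs p.1 p.2 then h.choose else (0, true)

lemma rElt_enc {x : W} (hx : x ∈ Rsym cs) :
    rElt cs (enc cs x).1 (enc cs x).2 = x := by
  have h := (mem_Rsym_iff cs).mp hx
  rw [enc]
  rw [dif_pos h]
  exact h.choose_spec.symm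

attribute [irreducible] enc

lemma length_rElt_mod_two (i : Fin (n + 1)) (d : Bool) :
    cs.length (rElt cs i d) % 2 = 0 := by
  cases d with
  | true =>
      have h := cs.length_mul_mod_two (cs.simple 0) (cs.simple i.succ)
      simp only [cs.length_simple] at h
      simpa [rElt] using h
  | false =>
      have h := cs.length_mul_mod_two (cs.simple i.succ) (cs.simple 0)
      simp only [cs.length_simple] at h
      simpa [rElt] using h

lemma even_mul_rElt {a : W} (ha : Even (cs.length a)) (i : Fin (n + 1)) (d : Bool) :
    Even (cs.length (a * rElt cs i d)) := by
  have h1 := cs.length_mul_mod_two a (rElt cs i d)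
  have h2 := length_rElt_mod_two cs i d
  rw [Nat.even_iff] at ha ⊢
  omega

lemma even_mul_rprod {a : W} (ha : Even (cs.length a)) (c : List (Fin (n + 1) × Bool)) :
    Even (cs.length (a * rprod cs c)) := by
  induction c generalizing a with
  | nil => simpa [rprod] using ha
  | cons p t ih =>
      have hsplit : a * rprod cs (p :: t) = (a * rElt cs p.1 p.2) * rprod cs t := by
        simp [rprod, mul_assoc]
      rw [hsplit]
      exact ih (even_mul_rElt cs ha p.1 p.2)

/-- the even-length representative of a coset `{v, v s₀}`. -/
noncomputable def ph (v : W) : W := if Even (cs.length v) then v else v * cs.simple 0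

lemma ph_even (v : W) : Even (cs.length (ph cs v)) := by
  rw [ph]
  split
  · assumption
  · next h =>
      have h1 := cs.length_mul_mod_two v (cs.simple 0)
      rw [cs.length_simple] at h1
      rw [Nat.not_even_iff] at h
      rw [Nat.even_iff]
      omega

include hχ0 in
lemma ph_theta {a : W} (ha : Even (cs.length a)) :
    ph cs (theta χ₀ (cs.simple 0) a) = a := by
  rcases chi_cases χ₀ a with h | h
  · rw [theta_of_pos χ₀ h, ph, if_pos ha]
  · rw [theta_of_neg χ₀ h, ph, if_neg, mul_assoc, cs.simple_mul_simple_self, mul_one]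
    have h1 := cs.length_mul_mod_two a (cs.simple 0)
    rw [cs.length_simple] at h1
    rw [Nat.even_iff] at ha
    rw [Nat.not_even_iff]
    omega

include hχ0 in
lemma theta_ph {v : W} (hv : χ₀ v = 1) :
    theta χ₀ (cs.simple 0) (ph cs v) = v := by
  rw [ph]
  split
  · exact theta_of_pos χ₀ hv _
  · have hneg : χ₀ (v * cs.simple 0) = -1 := by
      rw [map_mul, hv, hχ0, one_mul]
    rw [theta_of_neg χ₀ hneg, mul_assoc, cs.simple_mul_simple_self, mul_one]

include hχ0 in
lemma Th_ph (v : χ₀.ker) : Th cs χ₀ hχ0 (ph cs (v : W)) = v := by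
  apply Subtype.ext
  exact theta_ph cs χ₀ hχ0 v.2

include hχ0 in
lemma Th_inj {a b : W} (ha : Even (cs.length a)) (hb : Even (cs.length b))
    (h : Th cs χ₀ hχ0 a = Th cs χ₀ hχ0 b) : a = b := by
  have h' : theta χ₀ (cs.simple 0) a = theta χ₀ (cs.simple 0) b := congrArg Subtype.val h
  rw [← ph_theta cs χ₀ hχ0 ha, ← ph_theta cs χ₀ hχ0 hb, h']

variable {M' : CoxeterMatrix (Fin (n + 1) ⊕ Unit)} (cs' : CoxeterSystem M' χ₀.ker)

lemma gword_palindrome_refl (k : ℕ) :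
    ∀ (c : List (Fin (n + 1) × Bool)) (b : Bool), c.length = 2 * k + 1 → c.reverse = c →
      cs'.IsReflection (cs'.wordProd (gword b c)) := by
  induction k with
  | zero =>
      intro c b hlen _
      match c, hlen with
      | [p], _ =>
          have : cs'.wordProd (gword b [p]) = cs'.simple (gOf p.1 (p.2 == b)) := by
            simp [gword, cs'.wordProd_cons, cs'.wordProd_nil]
          rw [this]
          exact cs'.isReflection_simple _
  | succ k ih =>
      intro c b hlen hrev
      obtain ⟨p, m, rfl, hm, hmlen⟩ := palindrome_rec hrev (by omega : _ = (2 * k + 1) + 2)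
      have hodd : Odd m.length := ⟨k, by omega⟩
      have hg : gword b (p :: (m ++ [p])) =
          gOf p.1 (p.2 == b) :: (gword (!b) m ++ [gOf p.1 (p.2 == b)]) := by
        show gOf p.1 (p.2 == b) :: gword (!b) (m ++ [p]) = _
        rw [gword_append, if_pos hodd]
        simp [gword]
      rw [hg, cs'.wordProd_cons, cs'.wordProd_append]
      have h1 : cs'.wordProd [gOf p.1 (p.2 == b)] = cs'.simple (gOf p.1 (p.2 == b)) := by
        simp [cs'.wordProd_cons, cs'.wordProd_nil]
      rw [h1]
      have ht := (ih m (!b) hmlen hm).conj (cs'.simple (gOf p.1 (p.2 == b)))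
      rwa [cs'.inv_simple, mul_assoc] at ht

lemma rword_palindrome (k : ℕ) :
    ∀ (ω : List (Fin (n + 1) ⊕ Unit)) (b : Bool), ω.length = 2 * k + 1 → ω.reverse = ω →
      (rword b ω).reverse = rword b ω := by
  induction k with
  | zero =>
      intro ω b hlen _
      match ω, hlen with
      | [g], _ => rfl
  | succ k ih =>
      intro ω b hlen hrev
      obtain ⟨g, m, rfl, hm, hmlen⟩ := palindrome_rec hrev (by omega : _ = (2 * k + 1) + 2)
      have hodd : Odd m.length := ⟨k, by omega⟩
      have hr : rword b (g :: (m ++ [g])) =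
          (iOf g, eOf g == b) :: (rword (!b) m ++ [(iOf g, eOf g == b)]) := by
        show (iOf g, eOf g == b) :: rword (!b) (m ++ [g]) = _
        rw [rword_append, if_pos hodd]
        simp [rword]
      rw [hr]
      simp [List.reverse_append, ih m (!b) hmlen hm]

lemma refl_palindrome_word {t : χ₀.ker} (ht : cs'.IsReflection t) :
    ∃ Ω : List (Fin (n + 1) ⊕ Unit), Odd Ω.length ∧ Ω.reverse = Ω ∧ cs'.wordProd Ω = t := by
  obtain ⟨w, g, rfl⟩ := ht
  obtain ⟨ω, _, hw⟩ := cs'.exists_reduced_word' w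
  refine ⟨ω ++ g :: ω.reverse, ⟨ω.length, by simp; omega⟩, ?_, ?_⟩
  · simp [List.reverse_append]
  · rw [cs'.wordProd_append, cs'.wordProd_cons, cs'.wordProd_reverse, ← hw, ← mul_assoc]

section Core
variable (hleaf : ∀ j : Fin (n + 2), j ≠ 0 → j ≠ 1 → M 0 j = 2)
  (hsimple : ∀ i : Fin (n + 1), (cs'.simple (Sum.inl i) : W) = cs.simple i.succ)
  (hsimple' : (cs'.simple (Sum.inr ()) : W) = cs.simple 0 * cs.simple 1 * cs.simple 0)

include hleaf hsimple hsimple' in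
lemma coe_gOf (i : Fin (n + 1)) (e : Bool) :
    ((cs'.simple (gOf i e) : χ₀.ker) : W) =
      if e then cs.simple 0 * cs.simple i.succ * cs.simple 0 else cs.simple i.succ := by
  cases e with
  | false => simp [gOf, hsimple]
  | true =>
      by_cases hi : i = 0
      · subst hi
        simp [gOf, hsimple', Fin.succ_zero_eq_one]
      · have hne1 : i.succ ≠ 1 := by
          intro h
          apply hi
          have : i.succ = (0 : Fin (n + 1)).succ := by
            rw [h, Fin.succ_zero_eq_one]
          exact Fin.succ_injective _ this
        have hM : M 0 i.succ = 2 := hleaf i.succ (Fin.succ_ne_zero i) hne1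
        have hpow : (cs.simple 0 * cs.simple i.succ) ^ 2 = 1 := by
          have := cs.simple_mul_simple_pow 0 i.succ
          rwa [hM] at this
        have hcomm : cs.simple 0 * cs.simple i.succ * cs.simple 0 = cs.simple i.succ := by
          have h2 : cs.simple 0 * cs.simple i.succ * (cs.simple 0 * cs.simple i.succ) = 1 := by
            rw [← pow_two]; exact hpow
          have := congrArg (· * (cs.simple i.succ)⁻¹) h2
          simp only [mul_assoc, mul_inv_cancel, mul_one, one_mul] at this
          simpa [mul_assoc] using this
        simp [gOf, hi, hsimple, hcomm]
include hχ0 hχj hleaf hsimple hsimple' in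
lemma Th_mul_rElt (a : W) (i : Fin (n + 1)) (d : Bool) :
    Th cs χ₀ hχ0 (a * rElt cs i d) =
      Th cs χ₀ hχ0 a * cs'.simple (gOf i (d == sgn χ₀ a)) := by
  apply Subtype.ext
  have hchi : χ₀ (a * rElt cs i d) = χ₀ a * (-1) := by
    rw [map_mul, chi_rElt cs χ₀ hχ0 hχj]
  rw [Subgroup.coe_mul, coe_Th, coe_Th, coe_gOf cs χ₀ cs' hleaf hsimple hsimple']
  rcases chi_cases χ₀ a with h1 | h1
  · rw [sgn_eq_true χ₀ h1]
    have hneg : χ₀ (a * rElt cs i d) = -1 := by rw [hchi, h1]; decide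
    rw [theta_of_neg χ₀ hneg, theta_of_pos χ₀ h1]
    cases d <;>
      simp [rElt, mul_assoc, cs.simple_mul_simple_self]
  · rw [sgn_eq_false χ₀ h1]
    have hpos : χ₀ (a * rElt cs i d) = 1 := by rw [hchi, h1]; decide
    rw [theta_of_pos χ₀ hpos, theta_of_neg χ₀ h1]
    cases d <;>
      simp [rElt, mul_assoc, cs.simple_mul_simple_self]

include hχ0 hχj hleaf hsimple hsimple' in
lemma Th_mul_rprod (a : W) (c : List (Fin (n + 1) × Bool)) :
    Th cs χ₀ hχ0 (a * rprod cs c) =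
      Th cs χ₀ hχ0 a * cs'.wordProd (gword (sgn χ₀ a) c) := by
  induction c generalizing a with
  | nil => simp [rprod, gword, cs'.wordProd_nil]
  | cons p t ih =>
      have hsplit : a * rprod cs (p :: t) = (a * rElt cs p.1 p.2) * rprod cs t := by
        simp [rprod, mul_assoc]
      rw [hsplit, ih, Th_mul_rElt cs χ₀ hχ0 hχj cs' hleaf hsimple hsimple',
        sgn_mul_rElt cs χ₀ hχ0 hχj]
      show _ = _ * cs'.wordProd (gOf p.1 (p.2 == sgn χ₀ a) :: gword (!sgn χ₀ a) t)
      rw [cs'.wordProd_cons, mul_assoc]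

include hχ0 hχj hleaf hsimple hsimple' in
lemma Th_rprod (c : List (Fin (n + 1) × Bool)) :
    Th cs χ₀ hχ0 (rprod cs c) = cs'.wordProd (gword true c) := by
  have h := Th_mul_rprod cs χ₀ hχ0 hχj cs' hleaf hsimple hsimple' 1 c
  rwa [one_mul, Th_one, one_mul, sgn_one] at h

include hχ0 hχj hleaf hsimple hsimple' in
set_option maxHeartbeats 1000000 in
lemma glen_eq {w : W} (hw : Even (cs.length w)) :
    glen (Rsym cs) w = cs'.length (Th cs χ₀ hχ0 w) := by
  obtain ⟨ω, hωlen, hωw⟩ := cs'.exists_reduced_word (Th cs χ₀ hχ0 w)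
  set c : List (Fin (n + 1) × Bool) := rword true ω with hc
  have hTh : Th cs χ₀ hχ0 (rprod cs c) = Th cs χ₀ hχ0 w := by
    rw [Th_rprod cs χ₀ hχ0 hχj cs' hleaf hsimple hsimple', hc, gword_rword, ← hωw]
  have hceven : Even (cs.length (rprod cs c)) := by
    have h := even_mul_rprod cs (by simp : Even (cs.length (1 : W))) c
    simpa using h
  have hcw : (c.map fun p => rElt cs p.1 p.2).prod = w := Th_inj cs χ₀ hχ0 hceven hw hTh
  have hmem : cs'.length (Th cs χ₀ hχ0 w) ∈
      {k | ∃ l : List W, (∀ x ∈ l, x ∈ Rsym cs) ∧ l.prod = w ∧ l.length = k} := by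
    refine ⟨c.map fun p => rElt cs p.1 p.2, ?_, hcw, ?_⟩
    · intro x hx
      simp only [List.mem_map] at hx
      obtain ⟨p, _, rfl⟩ := hx
      exact rElt_mem_Rsym cs p.1 p.2
    · simp [hc]; rw [hωw]; exact hωlen.symm
  have h1 : glen (Rsym cs) w ≤ cs'.length (Th cs χ₀ hχ0 w) := Nat.sInf_le hmem
  have h2 : cs'.length (Th cs χ₀ hχ0 w) ≤ glen (Rsym cs) w := by
    obtain ⟨l, hl, hlw, hll⟩ := Nat.sInf_mem (⟨_, hmem⟩ :
      {k | ∃ l : List W, (∀ x ∈ l, x ∈ Rsym cs) ∧ l.prod = w ∧ l.length = k}.Nonempty)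
    have hprod : rprod cs (l.map (enc cs)) = w := by
      rw [rprod, List.map_map]
      have hmc : l.map ((fun p : Fin (n + 1) × Bool => rElt cs p.1 p.2) ∘ enc cs) = l.map id :=
        List.map_congr_left (fun x hx => rElt_enc cs (hl x hx))
      rw [hmc, List.map_id, hlw]
    have := Th_rprod cs χ₀ hχ0 hχj cs' hleaf hsimple hsimple' (l.map (enc cs))
    rw [hprod] at this
    calc cs'.length (Th cs χ₀ hχ0 w) = cs'.length (cs'.wordProd (gword true (l.map (enc cs)))) := by
          rw [this]
      _ ≤ (gword true (l.map (enc cs))).length := cs'.length_wordProd_le _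
      _ = l.length := by simp
      _ = glen (Rsym cs) w := hll
  omega

include hχ0 hχj hleaf hsimple hsimple' in
lemma weak_cover_bwd {a : W} (ha : Even (cs.length a)) (g : Fin (n + 1) ⊕ Unit) :
    ∃ r ∈ Rsym cs, Th cs χ₀ hχ0 (a * r) = Th cs χ₀ hχ0 a * cs'.simple g ∧
      Even (cs.length (a * r)) := by
  refine ⟨rElt cs (iOf g) (eOf g == sgn χ₀ a), rElt_mem_Rsym cs _ _, ?_,
    even_mul_rElt cs ha _ _⟩
  rw [Th_mul_rElt cs χ₀ hχ0 hχj cs' hleaf hsimple hsimple', beq_beq, gOf_iOf_eOf]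

include hχ0 hχj hleaf hsimple hsimple' in
lemma rweak_to {u w : W} (hu : Even (cs.length u)) (h : rweak cs u w) :
    Even (cs.length w) ∧ coxRweak cs' (Th cs χ₀ hχ0 u) (Th cs χ₀ hχ0 w) := by
  induction h with
  | refl => exact ⟨hu, Relation.ReflTransGen.refl⟩
  | @tail b c hab hcov ih =>
      obtain ⟨r, hr, rfl, hlen⟩ := hcov
      obtain ⟨p, rfl⟩ := (mem_Rsym_iff cs).mp hr
      have heven := even_mul_rElt cs ih.1 p.1 p.2
      refine ⟨heven, ih.2.tail ⟨gOf p.1 (p.2 == sgn χ₀ b), ?_, ?_⟩⟩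
      · exact Th_mul_rElt cs χ₀ hχ0 hχj cs' hleaf hsimple hsimple' b p.1 p.2
      · rw [← glen_eq cs χ₀ hχ0 hχj cs' hleaf hsimple hsimple' heven,
          ← glen_eq cs χ₀ hχ0 hχj cs' hleaf hsimple hsimple' ih.1, hlen]

include hχ0 hχj hleaf hsimple hsimple' in
lemma rweak_from {u : W} (hu : Even (cs.length u)) {w' : χ₀.ker}
    (h : coxRweak cs' (Th cs χ₀ hχ0 u) w') :
    rweak cs u (ph cs (w' : W)) ∧ Even (cs.length (ph cs (w' : W))) ∧
      Th cs χ₀ hχ0 (ph cs (w' : W)) = w' := by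
  induction h with
  | refl =>
      have h1 : ph cs ((Th cs χ₀ hχ0 u : χ₀.ker) : W) = u := ph_theta cs χ₀ hχ0 hu
      rw [h1]
      exact ⟨Relation.ReflTransGen.refl, hu, rfl⟩
  | @tail b c hab hcov ih =>
      obtain ⟨g, hc, hlen'⟩ := hcov
      obtain ⟨hw, heva, hTha⟩ := ih
      obtain ⟨r, hr, hThr, hevr⟩ :=
        weak_cover_bwd cs χ₀ hχ0 hχj cs' hleaf hsimple hsimple' heva g
      have hThc : Th cs χ₀ hχ0 (ph cs (b : W) * r) = c := by
        rw [hThr, hTha, ← hc]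
      have hphc : ph cs (c : W) = ph cs (b : W) * r := by
        rw [← hThc]
        exact ph_theta cs χ₀ hχ0 hevr
      have hglen : glen (Rsym cs) (ph cs (b : W) * r) = glen (Rsym cs) (ph cs (b : W)) + 1 := by
        rw [glen_eq cs χ₀ hχ0 hχj cs' hleaf hsimple hsimple' hevr,
          glen_eq cs χ₀ hχ0 hχj cs' hleaf hsimple hsimple' heva, hThc, hTha, hlen']
      refine ⟨?_, ?_, ?_⟩
      · rw [hphc]
        exact hw.tail ⟨r, hr, rfl, hglen⟩
      · rw [hphc]; exact hevr
      · rw [hphc]; exact hThc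

include hχ0 hχj hleaf hsimple hsimple' in
lemma strong_cover_fwd {a p : W} (ha : Even (cs.length a)) (hp : p ∈ Palin cs) :
    Even (cs.length (a * p)) ∧ ∃ t, cs'.IsReflection t ∧
      Th cs χ₀ hχ0 (a * p) = Th cs χ₀ hχ0 a * t := by
  obtain ⟨l, hl, hodd, hrev, rfl⟩ := hp
  have hrc : rprod cs (l.map (enc cs)) = l.prod := by
    rw [rprod, List.map_map]
    have hmc : l.map ((fun q : Fin (n + 1) × Bool => rElt cs q.1 q.2) ∘ enc cs) = l.map id :=
      List.map_congr_left (fun x hx => rElt_enc cs (hl x hx))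
    rw [hmc, List.map_id]
  have hcrev : (l.map (enc cs)).reverse = l.map (enc cs) := by
    rw [← List.map_reverse, hrev]
  obtain ⟨k, hk⟩ := hodd
  have hclen : (l.map (enc cs)).length = 2 * k + 1 := by simp [hk]
  constructor
  · rw [← hrc]; exact even_mul_rprod cs ha _
  · refine ⟨cs'.wordProd (gword (sgn χ₀ a) (l.map (enc cs))),
      gword_palindrome_refl χ₀ cs' k _ _ hclen hcrev, ?_⟩
    rw [← hrc, Th_mul_rprod cs χ₀ hχ0 hχj cs' hleaf hsimple hsimple']

include hχ0 hχj hleaf hsimple hsimple' in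
lemma strong_cover_bwd {a : W} (ha : Even (cs.length a)) {t : χ₀.ker}
    (ht : cs'.IsReflection t) :
    ∃ p ∈ Palin cs, Th cs χ₀ hχ0 (a * p) = Th cs χ₀ hχ0 a * t ∧
      Even (cs.length (a * p)) := by
  obtain ⟨Ω, hΩodd, hΩrev, hΩt⟩ := refl_palindrome_word χ₀ cs' ht
  obtain ⟨k, hk⟩ := hΩodd
  refine ⟨rprod cs (rword (sgn χ₀ a) Ω), ?_, ?_, even_mul_rprod cs ha _⟩
  · refine ⟨(rword (sgn χ₀ a) Ω).map fun q => rElt cs q.1 q.2, ?_, ?_, ?_, by rw [rprod]⟩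
    · intro x hx
      obtain ⟨q, _, rfl⟩ := List.mem_map.mp hx
      exact rElt_mem_Rsym cs q.1 q.2
    · refine ⟨k, ?_⟩
      simp [hk]
    · rw [← List.map_reverse, rword_palindrome k Ω _ hk hΩrev]
  · rw [Th_mul_rprod cs χ₀ hχ0 hχj cs' hleaf hsimple hsimple', gword_rword, hΩt]

include hχ0 hχj hleaf hsimple hsimple' in
lemma rstrong_to {u w : W} (hu : Even (cs.length u)) (h : rstrong cs u w) :
    Even (cs.length w) ∧ bruhatLE cs' (Th cs χ₀ hχ0 u) (Th cs χ₀ hχ0 w) := by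
  induction h with
  | refl => exact ⟨hu, Relation.ReflTransGen.refl⟩
  | @tail b c hab hcov ih =>
      obtain ⟨p, hp, rfl, hlen⟩ := hcov
      obtain ⟨heven, t, htt, hTh⟩ :=
        strong_cover_fwd cs χ₀ hχ0 hχj cs' hleaf hsimple hsimple' ih.1 hp
      refine ⟨heven, ih.2.tail ⟨t, htt, hTh, ?_⟩⟩
      rw [← glen_eq cs χ₀ hχ0 hχj cs' hleaf hsimple hsimple' heven,
        ← glen_eq cs χ₀ hχ0 hχj cs' hleaf hsimple hsimple' ih.1]
      exact hlen

include hχ0 hχj hleaf hsimple hsimple' in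
lemma rstrong_from {u : W} (hu : Even (cs.length u)) {w' : χ₀.ker}
    (h : bruhatLE cs' (Th cs χ₀ hχ0 u) w') :
    rstrong cs u (ph cs (w' : W)) ∧ Even (cs.length (ph cs (w' : W))) ∧
      Th cs χ₀ hχ0 (ph cs (w' : W)) = w' := by
  induction h with
  | refl =>
      have h1 : ph cs ((Th cs χ₀ hχ0 u : χ₀.ker) : W) = u := ph_theta cs χ₀ hχ0 hu
      rw [h1]
      exact ⟨Relation.ReflTransGen.refl, hu, rfl⟩
  | @tail b c hab hcov ih =>
      obtain ⟨t, htt, hc, hlen'⟩ := hcov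
      obtain ⟨hw, heva, hTha⟩ := ih
      obtain ⟨p, hp, hThp, hevp⟩ :=
        strong_cover_bwd cs χ₀ hχ0 hχj cs' hleaf hsimple hsimple' heva htt
      have hThc : Th cs χ₀ hχ0 (ph cs (b : W) * p) = c := by
        rw [hThp, hTha, ← hc]
      have hphc : ph cs (c : W) = ph cs (b : W) * p := by
        rw [← hThc]
        exact ph_theta cs χ₀ hχ0 hevp
      have hglen : glen (Rsym cs) (ph cs (b : W)) < glen (Rsym cs) (ph cs (b : W) * p) := by
        rw [glen_eq cs χ₀ hχ0 hχj cs' hleaf hsimple hsimple' hevp,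
          glen_eq cs χ₀ hχ0 hχj cs' hleaf hsimple hsimple' heva, hThc, hTha]
        exact hlen'
      refine ⟨?_, ?_, ?_⟩
      · rw [hphc]
        exact hw.tail ⟨p, hp, rfl, hglen⟩
      · rw [hphc]; exact hevp
      · rw [hphc]; exact hThc

end Core

end Aux

/-- When `s₀` is an even leaf, the bijection `θ : W⁺ → W' = ker χ₀` preserves
length (`ℓ_{R ∪ R⁻¹}(w) = ℓ_{S'}(θ(w))`), and is a poset isomorphism from the
right weak (resp. right strong) order on `W⁺` to the right weak (resp. strong
Bruhat) order on the Coxeter system `(W', S')`. -/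
theorem statement19 {W : Type*} [Group W] {n : ℕ} {M : CoxeterMatrix (Fin (n + 2))}
    (cs : CoxeterSystem M W)
    (hEven : Even (M 0 1)) (hleaf : ∀ j : Fin (n + 2), j ≠ 0 → j ≠ 1 → M 0 j = 2)
    (χ₀ : W →* ℤˣ) (hχ0 : χ₀ (cs.simple 0) = -1)
    (hχj : ∀ j : Fin (n + 2), j ≠ 0 → χ₀ (cs.simple j) = 1)
    (M' : CoxeterMatrix (Fin (n + 1) ⊕ Unit)) (cs' : CoxeterSystem M' χ₀.ker)
    (hsimple : ∀ i : Fin (n + 1), (cs'.simple (Sum.inl i) : W) = cs.simple i.succ)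
    (hsimple' : (cs'.simple (Sum.inr ()) : W) =
      cs.simple 0 * cs.simple 1 * cs.simple 0) :
    Set.BijOn (theta χ₀ (cs.simple 0)) (alt cs : Set W) (χ₀.ker : Set W) ∧
    (∀ w ∈ alt cs, ∀ v : χ₀.ker, (v : W) = theta χ₀ (cs.simple 0) w →
      glen (Rsym cs) w = cs'.length v) ∧
    (∀ u ∈ alt cs, ∀ w ∈ alt cs, ∀ u' w' : χ₀.ker,
      (u' : W) = theta χ₀ (cs.simple 0) u → (w' : W) = theta χ₀ (cs.simple 0) w →
      (rweak cs u w ↔ coxRweak cs' u' w')) ∧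
    (∀ u ∈ alt cs, ∀ w ∈ alt cs, ∀ u' w' : χ₀.ker,
      (u' : W) = theta χ₀ (cs.simple 0) u → (w' : W) = theta χ₀ (cs.simple 0) w →
      (rstrong cs u w ↔ bruhatLE cs' u' w')) := by
  have hker : ∀ a : W, theta χ₀ (cs.simple 0) a ∈ χ₀.ker := fun a =>
    MonoidHom.mem_ker.mpr (chi_theta cs χ₀ hχ0 a)
  refine ⟨⟨fun w hw => hker w, ?_, ?_⟩, ?_, ?_, ?_⟩
  · intro a ha b hb h
    have ha' : Even (cs.length a) := ha
    have hb' : Even (cs.length b) := hb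
    rw [← ph_theta cs χ₀ hχ0 ha', ← ph_theta cs χ₀ hχ0 hb', h]
  · intro v hv
    have hv' : χ₀ v = 1 := MonoidHom.mem_ker.mp hv
    exact ⟨ph cs v, ph_even cs v, theta_ph cs χ₀ hχ0 hv'⟩
  · intro w hw v hv
    have hveq : v = Th cs χ₀ hχ0 w := Subtype.ext hv
    rw [hveq]
    exact glen_eq cs χ₀ hχ0 hχj cs' hleaf hsimple hsimple' hw
  · intro u hu w hw u' w' hu' hw'
    have hu2 : Even (cs.length u) := hu
    have hw2 : Even (cs.length w) := hw
    have hueq : u' = Th cs χ₀ hχ0 u := Subtype.ext hu'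
    have hweq : w' = Th cs χ₀ hχ0 w := Subtype.ext hw'
    constructor
    · intro h
      rw [hueq, hweq]
      exact (rweak_to cs χ₀ hχ0 hχj cs' hleaf hsimple hsimple' hu2 h).2
    · intro h
      rw [hueq, hweq] at h
      have := rweak_from cs χ₀ hχ0 hχj cs' hleaf hsimple hsimple' hu2 h
      have hphw : ph cs ((Th cs χ₀ hχ0 w : χ₀.ker) : W) = w := ph_theta cs χ₀ hχ0 hw2
      rw [hphw] at this
      exact this.1
  · intro u hu w hw u' w' hu' hw'
    have hu2 : Even (cs.length u) := hu
    have hw2 : Even (cs.length w) := hw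
    have hueq : u' = Th cs χ₀ hχ0 u := Subtype.ext hu'
    have hweq : w' = Th cs χ₀ hχ0 w := Subtype.ext hw'
    constructor
    · intro h
      rw [hueq, hweq]
      exact (rstrong_to cs χ₀ hχ0 hχj cs' hleaf hsimple hsimple' hu2 h).2
    · intro h
      rw [hueq, hweq] at h
      have := rstrong_from cs χ₀ hχ0 hχj cs' hleaf hsimple hsimple' hu2 h
      have hphw : ph cs ((Th cs χ₀ hχ0 w : χ₀.ker) : W) = w := ph_theta cs χ₀ hχ0 hw2
      rw [hphw] at this
      exact this.1

end AltCox
end
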